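/- For any traceless matrix M ∈ ℂ^{d×d}, there exists an orthonormal basis {u_1,...,u_d} of ℂ^d such that ⟨u_i| M |u_i⟩ = 0 for all i. -/

import Mathlib

open Matrix

open Complex Real

lemma key_scalar (A₁ A₂ B C : ℂ) (s : ℝ) (hs0 : 0 ≤ s) (hs1 : s ≤ 1) :
    ∃ α β : ℂ, Complex.normSq α + Complex.normSq β = 1 ∧
      (starRingEnd ℂ α) * α * A₁ + (starRingEnd ℂ β) * β * A₂ +
        (starRingEnd ℂ α) * β * B + (starRingEnd ℂ β) * α * C
        = s * A₁ + (1 - s) * A₂ := by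
  by_cases hδ : A₁ - A₂ = 0
  · refine ⟨1, 0, by simp, ?_⟩
    have : A₁ = A₂ := sub_eq_zero.mp hδ
    simp [this]; ring
  · set h : ℝ → ℝ := fun t => ((B * Complex.exp (t * Complex.I) +
        C * Complex.exp (-(t * Complex.I))) / (A₁ - A₂)).im with hh
    have hcont : Continuous h := by
      apply Complex.continuous_im.comp
      apply Continuous.div_const
      fun_prop
    have hexppi : Complex.exp (((π : ℝ) : ℂ) * Complex.I) = -1 := by
      exact_mod_cast Complex.exp_pi_mul_I
    have hpi : h π = - h 0 := by
      have hnum : B * Complex.exp (((π:ℝ):ℂ) * Complex.I)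
            + C * Complex.exp (-(((π:ℝ):ℂ) * Complex.I))
          = -(B * Complex.exp (((0:ℝ):ℂ) * Complex.I)
            + C * Complex.exp (-(((0:ℝ):ℂ) * Complex.I))) := by
        rw [hexppi, Complex.exp_neg, hexppi]
        norm_num
        ring
      simp only [hh, hnum, neg_div, Complex.neg_im]
    have hπpos : (0:ℝ) ≤ π := le_of_lt Real.pi_pos
    have hz : ∃ t₀ ∈ Set.Icc (0:ℝ) π, h t₀ = 0 := by
      rcases le_total (h 0) 0 with h0 | h0
      · have := intermediate_value_Icc hπpos hcont.continuousOn (a := 0) (b := π)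
        exact this ⟨h0, by rw [hpi]; linarith⟩
      · have := intermediate_value_Icc' hπpos hcont.continuousOn (a := 0) (b := π)
        exact this ⟨by rw [hpi]; linarith, h0⟩
    obtain ⟨t₀, -, ht₀⟩ := hz
    set μ : ℝ := ((B * Complex.exp (t₀ * Complex.I) +
        C * Complex.exp (-(t₀ * Complex.I))) / (A₁ - A₂)).re with hμ
    have hEeq : B * Complex.exp (t₀ * Complex.I) + C * Complex.exp (-(t₀ * Complex.I))
        = (μ : ℂ) * (A₁ - A₂) := by
      have hE : (B * Complex.exp (t₀ * Complex.I) +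
          C * Complex.exp (-(t₀ * Complex.I))) / (A₁ - A₂) = (μ : ℂ) :=
        Complex.ext rfl (by simpa using ht₀)
      field_simp at hE
      linear_combination hE
    set g : ℝ → ℝ := fun θ => (1 - s) * (Real.cos θ)^2 - s * (Real.sin θ)^2
        + μ * Real.cos θ * Real.sin θ with hg
    have hgcont : Continuous g := by fun_prop
    have hg0 : g 0 = 1 - s := by simp [hg]
    have hgpi2 : g (π/2) = -s := by simp [hg]
    have hz2 : ∃ θ₀ ∈ Set.Icc (0:ℝ) (π/2), g θ₀ = 0 := by
      have h2 : (0:ℝ) ≤ π/2 := by linarith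
      exact intermediate_value_Icc' h2 hgcont.continuousOn
        ⟨by rw [hgpi2]; linarith, by rw [hg0]; linarith⟩
    obtain ⟨θ₀, -, hθ₀⟩ := hz2
    refine ⟨(Real.cos θ₀ : ℂ), Complex.exp (t₀ * Complex.I) * (Real.sin θ₀ : ℂ), ?_, ?_⟩
    · rw [Complex.normSq_mul]
      have h1 : Complex.normSq (Complex.exp (t₀ * Complex.I)) = 1 := by
        rw [Complex.normSq_eq_norm_sq, Complex.norm_exp_ofReal_mul_I]; norm_num
      rw [h1, one_mul, Complex.normSq_ofReal, Complex.normSq_ofReal]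
      nlinarith [Real.sin_sq_add_cos_sq θ₀]
    · have hconj : (starRingEnd ℂ) (Complex.exp (t₀ * Complex.I))
          = Complex.exp (-(t₀ * Complex.I)) := by
        rw [← Complex.exp_conj]
        congr 1
        rw [_root_.map_mul, Complex.conj_ofReal, Complex.conj_I]
        ring
      simp only [_root_.map_mul, hconj, Complex.conj_ofReal]
      have h1 : Complex.exp (-(t₀ * Complex.I)) * Complex.exp (t₀ * Complex.I) = 1 := by
        rw [← Complex.exp_add]; simp
      have h2 : (Real.cos θ₀ : ℂ)^2 + (Real.sin θ₀ : ℂ)^2 = 1 := by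
        exact_mod_cast congrArg (fun x : ℝ => (x : ℂ)) (Real.cos_sq_add_sin_sq θ₀)
      have h4 : (1 - (s:ℂ)) * (Real.cos θ₀ : ℂ)^2 - (s:ℂ) * (Real.sin θ₀:ℂ)^2
          + (μ:ℂ) * (Real.cos θ₀:ℂ) * (Real.sin θ₀:ℂ) = 0 := by
        exact_mod_cast congrArg (fun x : ℝ => (x : ℂ)) hθ₀
      linear_combination ((Real.sin θ₀:ℂ)^2 * A₂) * h1
        + ((Real.cos θ₀:ℂ) * (Real.sin θ₀:ℂ)) * hEeq
        + (A₁ - A₂) * h4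
        + ((s:ℂ) * A₁ + (1 - (s:ℂ)) * A₂) * h2

open Matrix in
lemma dot_expand {D : ℕ} (x y w : Fin D → ℂ) (α β : ℂ) :
    star (α • x + β • y) ⬝ᵥ w
      = (starRingEnd ℂ α) * (star x ⬝ᵥ w) + (starRingEnd ℂ β) * (star y ⬝ᵥ w) := by
  simp [star_add, star_smul, add_dotProduct, smul_dotProduct, smul_eq_mul,
    Complex.star_def]

open Matrix in
lemma pair_lemma {D : ℕ} (M : Matrix (Fin D) (Fin D) ℂ) (x y : Fin D → ℂ)
    (hx : star x ⬝ᵥ x = 1) (hy : star y ⬝ᵥ y = 1)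
    (hxy : star x ⬝ᵥ y = 0) (hyx : star y ⬝ᵥ x = 0)
    (s : ℝ) (hs0 : 0 ≤ s) (hs1 : s ≤ 1) :
    ∃ α β : ℂ,
      star (α • x + β • y) ⬝ᵥ (α • x + β • y) = 1 ∧
      star (α • x + β • y) ⬝ᵥ M.mulVec (α • x + β • y)
        = s * (star x ⬝ᵥ M.mulVec x) + (1 - s) * (star y ⬝ᵥ M.mulVec y) := by
  obtain ⟨α, β, hnorm, heq⟩ := key_scalar (star x ⬝ᵥ M.mulVec x) (star y ⬝ᵥ M.mulVec y)
    (star x ⬝ᵥ M.mulVec y) (star y ⬝ᵥ M.mulVec x) s hs0 hs1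
  refine ⟨α, β, ?_, ?_⟩
  · rw [dot_expand, dotProduct_add, dotProduct_add, dotProduct_smul, dotProduct_smul,
      dotProduct_smul, dotProduct_smul, hx, hy, hxy, hyx]
    have h1 : (starRingEnd ℂ α) * α = (Complex.normSq α : ℂ) := by
      rw [← Complex.mul_conj]; ring
    have h2 : (starRingEnd ℂ β) * β = (Complex.normSq β : ℂ) := by
      rw [← Complex.mul_conj]; ring
    simp only [smul_eq_mul]
    have := congrArg (fun r : ℝ => (r : ℂ)) hnorm
    push_cast at this
    rw [← h1, ← h2] at this
    linear_combination this
  · rw [Matrix.mulVec_add, Matrix.mulVec_smul, Matrix.mulVec_smul, dot_expand,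
      dotProduct_add, dotProduct_add, dotProduct_smul, dotProduct_smul,
      dotProduct_smul, dotProduct_smul]
    simp only [smul_eq_mul]
    linear_combination heq

open Matrix in
lemma conv_zero {D : ℕ} (M : Matrix (Fin D) (Fin D) ℂ) :
    ∀ n (e : Fin n → Fin D → ℂ) (t : Fin n → ℝ),
      (∀ i j, star (e i) ⬝ᵥ e j = if i = j then 1 else 0) →
      (∀ i, 0 ≤ t i) → (∑ i, t i) = 1 →
      (∑ i, (t i : ℂ) * (star (e i) ⬝ᵥ M.mulVec (e i))) = 0 →
      ∃ v : Fin D → ℂ, star v ⬝ᵥ v = 1 ∧ star v ⬝ᵥ M.mulVec v = 0 := by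
  intro n
  induction n with
  | zero =>
    intro e t _ _ hsum _
    simp at hsum
  | succ n ih =>
    intro e t he ht hsum hq
    match n, e, t, he, ht, hsum, hq, ih with
    | 0, e, t, he, ht, hsum, hq, ih =>
      refine ⟨e 0, by simpa using he 0 0, ?_⟩
      have ht0 : t 0 = 1 := by simpa using hsum
      have := hq
      simp [Fin.sum_univ_one, ht0] at this
      exact this
    | (n+1), e, t, he, ht, hsum, hq, ih =>
      by_cases ht01 : t 0 + t 1 = 0
      · -- t 0 = 0, drop e 0
        have ht0 : t 0 = 0 := by have := ht 0; have := ht 1; linarith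
        refine ih (fun k => e k.succ) (fun k => t k.succ) (fun i j => ?_) (fun i => ht _) ?_ ?_
        · rw [he i.succ j.succ]
          simp [Fin.succ_inj]
        · have := hsum
          rw [Fin.sum_univ_succ] at this
          linarith
        · have := hq
          rw [Fin.sum_univ_succ, ht0] at this
          simpa using this
      · have hpos : 0 < t 0 + t 1 := lt_of_le_of_ne (by have := ht 0; have := ht 1; linarith)
          (Ne.symm ht01)
        set s : ℝ := t 0 / (t 0 + t 1) with hs
        have hs0 : 0 ≤ s := div_nonneg (ht 0) hpos.le
        have hs1 : s ≤ 1 := (div_le_one hpos).mpr (by have := ht 1; linarith)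
        obtain ⟨α, β, hv1, hvq⟩ := pair_lemma M (e 0) (e 1)
          (by simpa using he 0 0) (by simpa using he 1 1)
          (by simpa using he 0 1) (by simpa using he 1 0) s hs0 hs1
        set v : Fin D → ℂ := α • e 0 + β • e 1 with hv
        refine ih (Fin.cases v (fun k => e k.succ.succ))
          (Fin.cases (t 0 + t 1) (fun k => t k.succ.succ)) ?_ ?_ ?_ ?_
        · intro i j
          induction i using Fin.cases with
          | zero =>
            induction j using Fin.cases with
            | zero => simpa using hv1
            | succ j =>
              simp only [Fin.cases_zero, Fin.cases_succ]
              rw [hv, dot_expand, he, he]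
              have h1 : (0 : Fin (n+2)) ≠ j.succ.succ := by
                simp [Fin.ext_iff]
              have h2 : (1 : Fin (n+2)) ≠ j.succ.succ := by
                apply Fin.ne_of_val_ne
                simp only [Fin.val_succ, Fin.val_one]
                omega
              rw [if_neg h1, if_neg h2]
              simp [Fin.ext_iff]
          | succ i =>
            induction j using Fin.cases with
            | zero =>
              simp only [Fin.cases_zero, Fin.cases_succ]
              rw [hv, dotProduct_add, dotProduct_smul, dotProduct_smul, he, he]
              have h1 : i.succ.succ ≠ (0 : Fin (n+2)) := by simp [Fin.ext_iff]
              have h2 : i.succ.succ ≠ (1 : Fin (n+2)) := by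
                apply Fin.ne_of_val_ne
                simp only [Fin.val_succ, Fin.val_one]
                omega
              rw [if_neg h1, if_neg h2]
              simp [Fin.ext_iff]
            | succ j =>
              simp only [Fin.cases_succ]
              rw [he]
              simp [Fin.succ_inj]
        · intro i
          induction i using Fin.cases with
          | zero => simpa using hpos.le
          | succ i => simpa using ht _
        · rw [Fin.sum_univ_succ]
          simp only [Fin.cases_zero, Fin.cases_succ]
          have := hsum
          rw [Fin.sum_univ_succ, Fin.sum_univ_succ, Fin.succ_zero_eq_one] at this
          linarith
        · rw [Fin.sum_univ_succ]
          simp only [Fin.cases_zero, Fin.cases_succ]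
          have hkey : ((t 0 + t 1 : ℝ) : ℂ) * (star v ⬝ᵥ M.mulVec v)
              = (t 0 : ℂ) * (star (e 0) ⬝ᵥ M.mulVec (e 0))
                + (t 1 : ℂ) * (star (e 1) ⬝ᵥ M.mulVec (e 1)) := by
            rw [hvq]
            have hs'R : s * (t 0 + t 1) = t 0 := by
              rw [hs]; field_simp
            have hs''R : (1 - s) * (t 0 + t 1) = t 1 := by
              rw [hs]; field_simp; ring
            have hs' : (s : ℂ) * ((t 0 : ℂ) + (t 1 : ℂ)) = (t 0 : ℂ) := by
              exact_mod_cast congrArg (fun x : ℝ => (x : ℂ)) hs'R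
            have hs'' : (1 - (s : ℂ)) * ((t 0 : ℂ) + (t 1 : ℂ)) = (t 1 : ℂ) := by
              exact_mod_cast congrArg (fun x : ℝ => (x : ℂ)) hs''R
            push_cast
            linear_combination (star (e 0) ⬝ᵥ M.mulVec (e 0)) * hs'
              + (star (e 1) ⬝ᵥ M.mulVec (e 1)) * hs''
          rw [hkey]
          have := hq
          rw [Fin.sum_univ_succ, Fin.sum_univ_succ, Fin.succ_zero_eq_one] at this
          linear_combination this

open Matrix in
lemma sum_q_eq_trace {D : ℕ} (M : Matrix (Fin D) (Fin D) ℂ) (b : Fin D → Fin D → ℂ)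
    (hb : ∀ i j, star (b i) ⬝ᵥ b j = if i = j then 1 else 0) :
    ∑ i, star (b i) ⬝ᵥ M.mulVec (b i) = M.trace := by
  set U : Matrix (Fin D) (Fin D) ℂ := Matrix.of (fun i j => b i j) with hU
  have hUU : U * U.conjTranspose = 1 := by
    ext i j
    rw [Matrix.mul_apply, Matrix.one_apply]
    have := hb j i
    simp only [dotProduct, Pi.star_apply] at this
    have h2 : ∑ k, U i k * U.conjTranspose k j = ∑ k, star (b j k) * b i k := by
      apply Finset.sum_congr rfl
      intro k _
      simp only [hU, Matrix.conjTranspose_apply, Matrix.of_apply]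
      ring
    rw [h2, this]
    simp [eq_comm]
  have hUU' : U.conjTranspose * U = 1 := mul_eq_one_comm.mp hUU
  have horth : ∀ k l, ∑ i, star (b i k) * b i l = if k = l then 1 else 0 := by
    intro k l
    have := congrFun (congrFun hUU' k) l
    rw [Matrix.mul_apply, Matrix.one_apply] at this
    rw [← this]
    apply Finset.sum_congr rfl
    intro i _
    simp [hU, Matrix.conjTranspose_apply]
  calc ∑ i, star (b i) ⬝ᵥ M.mulVec (b i)
      = ∑ i, ∑ k, ∑ l, M k l * (star (b i k) * b i l) := by
        apply Finset.sum_congr rfl; intro i _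
        simp only [dotProduct, Matrix.mulVec, Pi.star_apply, Finset.mul_sum]
        apply Finset.sum_congr rfl; intro k _
        apply Finset.sum_congr rfl; intro l _
        ring
    _ = ∑ k, ∑ l, M k l * (∑ i, star (b i k) * b i l) := by
        rw [Finset.sum_comm]
        apply Finset.sum_congr rfl; intro k _
        rw [Finset.sum_comm]
        apply Finset.sum_congr rfl; intro l _
        rw [Finset.mul_sum]
    _ = ∑ k, M k k := by
        apply Finset.sum_congr rfl; intro k _
        rw [Finset.sum_eq_single k]
        · rw [horth k k, if_pos rfl, mul_one]
        · intro l _ hl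
          rw [horth k l, if_neg (fun h => hl h.symm), mul_zero]
        · intro h; exact absurd (Finset.mem_univ k) h
    _ = M.trace := by
        simp [Matrix.trace, Matrix.diag]

open Matrix in
lemma extend_onb {D : ℕ} (v : Fin (D+1) → ℂ) (hv : star v ⬝ᵥ v = 1) :
    ∃ b : Fin (D+1) → Fin (D+1) → ℂ,
      (∀ i j, star (b i) ⬝ᵥ b j = if i = j then 1 else 0) ∧ b 0 = v := by
  classical
  set v' : EuclideanSpace ℂ (Fin (D+1)) := (WithLp.equiv 2 _).symm v with hv'
  have hcard : Module.finrank ℂ (EuclideanSpace ℂ (Fin (D+1))) = Fintype.card (Fin (D+1)) := by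
    rw [finrank_euclideanSpace_fin, Fintype.card_fin]
  have horth : Orthonormal ℂ (({0} : Set (Fin (D+1))).restrict (fun _ => v')) := by
    rw [orthonormal_iff_ite]
    rintro ⟨i, hi⟩ ⟨j, hj⟩
    have hij : i = j := by
      simp only [Set.mem_singleton_iff] at hi hj
      rw [hi, hj]
    subst hij
    rw [if_pos rfl]
    rw [hv', EuclideanSpace.inner_eq_star_dotProduct, dotProduct_comm]
    exact hv
  obtain ⟨b, hb0⟩ := horth.exists_orthonormalBasis_extension_of_card_eq hcard
  refine ⟨fun i => WithLp.equiv 2 _ (b i), fun i j => ?_, ?_⟩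
  · have := (orthonormal_iff_ite.mp b.orthonormal) i j
    rw [EuclideanSpace.inner_eq_star_dotProduct, dotProduct_comm] at this
    exact this
  · have := hb0 0 rfl
    simp only [this, hv']
    simp

open Matrix in
lemma sum_dot {n D : ℕ} (f : Fin n → Fin D → ℂ) (w : Fin D → ℂ) :
    (∑ i, f i) ⬝ᵥ w = ∑ i, f i ⬝ᵥ w := by
  simp only [dotProduct, Finset.sum_apply, Finset.sum_mul]
  exact Finset.sum_comm

open Matrix in
lemma dot_sum {n D : ℕ} (w : Fin D → ℂ) (f : Fin n → Fin D → ℂ) :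
    w ⬝ᵥ (∑ i, f i) = ∑ i, w ⬝ᵥ f i := by
  simp only [dotProduct, Finset.sum_apply, Finset.mul_sum]
  exact Finset.sum_comm

open Matrix in
lemma dot_dot {D n : ℕ} (M : Matrix (Fin D) (Fin D) ℂ) (c e : Fin n → ℂ)
    (x y : Fin n → Fin D → ℂ) :
    star (∑ i, c i • x i) ⬝ᵥ M.mulVec (∑ j, e j • y j)
      = ∑ i, ∑ j, (starRingEnd ℂ (c i)) * e j * (star (x i) ⬝ᵥ M.mulVec (y j)) := by
  rw [star_sum, sum_dot]
  apply Finset.sum_congr rfl; intro i _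
  have hmv : M.mulVec (∑ j, e j • y j) = ∑ j, e j • M.mulVec (y j) := by
    rw [show M.mulVec = M.mulVecLin from rfl, map_sum]
    simp
  rw [hmv, dot_sum]
  apply Finset.sum_congr rfl; intro j _
  rw [star_smul, smul_dotProduct, dotProduct_smul]
  simp only [smul_eq_mul, Complex.star_def]
  ring

open Matrix in
lemma dot_dot' {D n : ℕ} (c e : Fin n → ℂ) (x y : Fin n → Fin D → ℂ) :
    star (∑ i, c i • x i) ⬝ᵥ (∑ j, e j • y j)
      = ∑ i, ∑ j, (starRingEnd ℂ (c i)) * e j * (star (x i) ⬝ᵥ y j) := by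
  rw [star_sum, sum_dot]
  apply Finset.sum_congr rfl; intro i _
  rw [dot_sum]
  apply Finset.sum_congr rfl; intro j _
  rw [star_smul, smul_dotProduct, dotProduct_smul]
  simp only [smul_eq_mul, Complex.star_def]
  ring

open Matrix

/-- For any traceless matrix `M ∈ ℂ^{d×d}` there exists an orthonormal basis
`u_1, ..., u_d` of `ℂ^d` such that `⟨u_i| M |u_i⟩ = 0` for all `i`. -/
theorem zero_diagonalization (d : ℕ) (M : Matrix (Fin d) (Fin d) ℂ)
    (hM : M.trace = 0) :
    ∃ u : Fin d → (Fin d → ℂ),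
      (∀ i j, star (u i) ⬝ᵥ u j = if i = j then 1 else 0) ∧
      (∀ i, star (u i) ⬝ᵥ M.mulVec (u i) = 0) := by
  induction d with
  | zero => exact ⟨fun i => i.elim0, fun i => i.elim0, fun i => i.elim0⟩
  | succ d ih =>
    -- Step 1: a unit vector on which the quadratic form vanishes
    have hstd : ∀ i j : Fin (d+1),
        star (Pi.single i (1:ℂ)) ⬝ᵥ Pi.single j (1:ℂ) = if i = j then 1 else 0 := by
      intro i j
      simp only [dotProduct, Pi.star_apply, Pi.single_apply]
      by_cases h : i = j
      · subst h
        rw [if_pos rfl, Finset.sum_eq_single i]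
        · simp
        · intro k _ hk; simp [if_neg hk]
        · intro h; exact absurd (Finset.mem_univ i) h
      · rw [if_neg h, Finset.sum_eq_zero]
        intro k _
        by_cases hk : k = i
        · rw [if_pos hk, if_neg (fun hh : k = j => h (hk.symm.trans hh)), mul_zero]
        · rw [if_neg hk, star_zero, zero_mul]
    have hqstd : ∀ i : Fin (d+1),
        star (Pi.single i (1:ℂ)) ⬝ᵥ M.mulVec (Pi.single i 1) = M i i := by
      intro i
      simp only [dotProduct, Pi.star_apply, Pi.single_apply, Matrix.mulVec]
      rw [Finset.sum_eq_single i]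
      · simp only [if_pos rfl, star_one, one_mul]
        rw [Finset.sum_eq_single i]
        · simp
        · intro k _ hk; simp [if_neg hk]
        · intro h; exact absurd (Finset.mem_univ i) h
      · intro k _ hk; simp [if_neg hk]
      · intro h; exact absurd (Finset.mem_univ i) h
    have hpos : (0:ℝ) < (d+1 : ℝ) := by positivity
    obtain ⟨v, hv1, hvq⟩ := conv_zero M (d+1) (fun i => Pi.single i 1)
      (fun _ => ((d:ℝ)+1)⁻¹) hstd (fun _ => by positivity)
      (by
        rw [Finset.sum_const, Finset.card_univ, Fintype.card_fin, nsmul_eq_mul]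
        push_cast
        field_simp)
      (by
        have : ∀ i : Fin (d+1), ((((d:ℝ)+1)⁻¹ : ℝ) : ℂ) *
            (star (Pi.single i (1:ℂ)) ⬝ᵥ M.mulVec (Pi.single i 1))
              = ((((d:ℝ)+1)⁻¹ : ℝ) : ℂ) * M i i := by
          intro i; rw [hqstd]
        rw [Finset.sum_congr rfl (fun i _ => this i), ← Finset.mul_sum]
        have htr : ∑ i, M i i = M.trace := by simp [Matrix.trace, Matrix.diag]
        rw [htr, hM, mul_zero])
    obtain ⟨b, hb, hb0⟩ := extend_onb v hv1
    set N : Matrix (Fin d) (Fin d) ℂ :=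
      Matrix.of (fun i j : Fin d => star (b i.succ) ⬝ᵥ M.mulVec (b j.succ)) with hN
    have htrN : N.trace = 0 := by
      have h1 := sum_q_eq_trace M b hb
      rw [Fin.sum_univ_succ, hb0, hvq, zero_add, hM] at h1
      have h2 : N.trace = ∑ i : Fin d, star (b i.succ) ⬝ᵥ M.mulVec (b i.succ) := by
        simp [Matrix.trace, Matrix.diag, hN]
      rw [h2, h1]
    obtain ⟨w, hw, hwq⟩ := ih N htrN
    refine ⟨Fin.cases v (fun k => ∑ i, w k i • b i.succ), ?_, ?_⟩
    · intro i j
      induction i using Fin.cases with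
      | zero =>
        induction j using Fin.cases with
        | zero => simpa using hv1
        | succ j =>
          simp only [Fin.cases_zero, Fin.cases_succ]
          rw [dot_sum, if_neg (Fin.succ_ne_zero j).symm]
          apply Finset.sum_eq_zero
          intro k _
          rw [dotProduct_smul, ← hb0, hb, if_neg (Fin.succ_ne_zero k).symm]
          simp
      | succ i =>
        induction j using Fin.cases with
        | zero =>
          simp only [Fin.cases_zero, Fin.cases_succ]
          rw [star_sum, sum_dot, if_neg (Fin.succ_ne_zero i)]
          apply Finset.sum_eq_zero
          intro k _
          rw [star_smul, smul_dotProduct, ← hb0, hb, if_neg (Fin.succ_ne_zero k)]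
          simp
        | succ j =>
          simp only [Fin.cases_succ]
          rw [dot_dot']
          have hstep : ∀ k : Fin d, ∑ l : Fin d,
              (starRingEnd ℂ) (w i k) * w j l * (star (b k.succ) ⬝ᵥ b l.succ)
              = (starRingEnd ℂ) (w i k) * w j k := by
            intro k
            rw [Finset.sum_eq_single k]
            · rw [hb, if_pos rfl, mul_one]
            · intro l _ hl
              rw [hb, if_neg (fun hh => hl (Fin.succ_injective _ hh).symm), mul_zero]
            · intro h; exact absurd (Finset.mem_univ k) h
          rw [Finset.sum_congr rfl (fun k _ => hstep k)]
          have := hw i j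
          simp only [dotProduct, Pi.star_apply, Complex.star_def] at this
          rw [this]
          simp [Fin.succ_inj]
    · intro i
      induction i using Fin.cases with
      | zero => simpa using hvq
      | succ i =>
        simp only [Fin.cases_succ]
        rw [dot_dot]
        have := hwq i
        simp only [dotProduct, Matrix.mulVec, Pi.star_apply, Complex.star_def] at this
        rw [← this]
        apply Finset.sum_congr rfl
        intro k _
        rw [Finset.mul_sum]
        apply Finset.sum_congr rfl
        intro l _
        simp only [hN, Matrix.of_apply]
        ring
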